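/- Let q be a prime power and let 0 ≤ t ≤ q, 2 ≤ m ≤ q−1, and 0 ≤ ℓ ≤ m−1 be integers. Then the Xing–Ling code C_q(t,m,ℓ) is a linear code over F_q of length n = t + (q²−q)/2, dimension m(m−1)/2 + ℓ + 1, and minimum distance at least the designed distance δ = n − (q(m−1) + ℓ + g)/2, where g = min{max{2(m−2), m+ℓ−1}, t} if q is odd, g = max{min{m−2, t}, 2t−q} if q is even and ℓ ≤ m−2, and g = max{min{m−1, t}, 2t−q} if q is even and ℓ = m−1. -/

import Mathlib

/-- The Euclidean dual of a linear code `C ⊆ F^ι`. -/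
noncomputable def dualCode {F : Type*} [Field F] {ι : Type*} [Fintype ι]
    (C : Submodule F (ι → F)) : Submodule F (ι → F) where
  carrier := {u | ∀ v ∈ C, ∑ i, u i * v i = 0}
  add_mem' := by
    intro a b ha hb v hv
    have h : ∑ i, (a i + b i) * v i = (∑ i, a i * v i) + ∑ i, b i * v i := by
      rw [← Finset.sum_add_distrib]
      exact Finset.sum_congr rfl fun i _ => add_mul _ _ _
    simp [h, ha v hv, hb v hv]
  zero_mem' := by
    intro v hv
    simp
  smul_mem' := by
    intro c a ha v hv
    have h : ∑ i, (c * a i) * v i = c * ∑ i, a i * v i := by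
      rw [Finset.mul_sum]
      exact Finset.sum_congr rfl fun i _ => mul_assoc _ _ _
    simp [smul_eq_mul, h, ha v hv]

/-- The minimum distance of a linear code: the least Hamming weight of a
nonzero codeword. -/
noncomputable def minDist {F : Type*} [Field F] [DecidableEq F] {ι : Type*} [Fintype ι]
    (C : Submodule F (ι → F)) : ℕ :=
  sInf {w | ∃ v ∈ C, v ≠ 0 ∧ hammingNorm v = w}

/-- The Xing–Ling basis polynomial `e_{i,j}(x) = x^{iq+j} + x^{jq+i}` if `i ≠ j`,
and `e_{i,j}(x) = x^{iq+j}` if `i = j`, viewed as a function `K → K`. -/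
def ePoly (K : Type*) [Field K] (q i j : ℕ) (x : K) : K :=
  if i = j then x ^ (i * q + j) else x ^ (i * q + j) + x ^ (j * q + i)

/-- The generating set of the Xing–Ling code `C_q(t,m,ℓ)`: the evaluations, at the
points `α_1, …, α_t, β_1, …, β_r`, of the polynomials `e_{i,j}` for
`0 ≤ i ≤ j ≤ m−2` together with `e_{i,m−1}` for `0 ≤ i ≤ ℓ`.  The `F`-valued
evaluation is given by `E : ℕ → ℕ → K → F` (a lift of `ePoly`, whose values lie in
the subfield). -/
def XLgen (F K : Type*) {t r : ℕ} (α : Fin t → K) (β : Fin r → K)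
    (E : ℕ → ℕ → K → F) (m ℓ : ℕ) : Set (Fin t ⊕ Fin r → F) :=
  {w | ∃ i j : ℕ, i ≤ j ∧ j ≤ m - 2 ∧ w = fun p => E i j (Sum.elim α β p)} ∪
  {w | ∃ i : ℕ, i ≤ ℓ ∧ w = fun p => E i (m - 1) (Sum.elim α β p)}

section XLAux
open Polynomial Finset


lemma tri_card (n : ℕ) :
    (((Finset.range n) ×ˢ (Finset.range n)).filter (fun p => p.1 ≤ p.2)).card = n*(n+1)/2 := by
  classical
  have h1 : (((Finset.range n) ×ˢ (Finset.range n)).filter (fun p => p.1 ≤ p.2)).card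
      = ∑ i ∈ Finset.range n, (n - i) := by
    rw [Finset.card_filter, Finset.sum_product]
    refine Finset.sum_congr rfl fun i hi => ?_
    rw [← Finset.card_filter]
    have : (Finset.range n).filter (fun j => i ≤ j) = Finset.Ico i n := by
      ext j; simp only [Finset.mem_filter, Finset.mem_range, Finset.mem_Ico]; omega
    rw [this, Nat.card_Ico]
  rw [h1]
  have h2 : ∑ i ∈ Finset.range n, (n - i) = ∑ i ∈ Finset.range n, (i + 1) := by
    rw [← Finset.sum_range_reflect]
    refine Finset.sum_congr rfl fun j hj => ?_
    simp only [Finset.mem_range] at hj; omega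
  rw [h2]
  have h3 : (∑ i ∈ Finset.range (n+1), i) * 2 = (n+1) * n := by simpa using Finset.sum_range_id_mul_two (n+1)
  have h4 : ∑ i ∈ Finset.range (n+1), i = (∑ i ∈ Finset.range n, (i + 1)) := by
    rw [Finset.sum_range_succ']; simp
  have h5 : n * (n+1) = (n+1) * n := Nat.mul_comm _ _
  have h6 : 2 * (n*(n+1)/2) = n*(n+1) := Nat.two_mul_div_two_of_even (Nat.even_mul_succ_self n)
  omega

lemma digit_unique {q i j i' j' : ℕ} (hq : 0 < q) (hj : j < q) (hj' : j' < q)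
    (h : i*q + j = i'*q + j') : i = i' ∧ j = j' := by
  have h1 : (i*q + j) % q = j := by
    rw [Nat.add_comm, Nat.add_mul_mod_self_right, Nat.mod_eq_of_lt hj]
  have h2 : (i'*q + j') % q = j' := by
    rw [Nat.add_comm, Nat.add_mul_mod_self_right, Nat.mod_eq_of_lt hj']
  have hjj : j = j' := by rw [← h1, ← h2, h]
  constructor
  · have : i * q = i' * q := by omega
    exact Nat.eq_of_mul_eq_mul_right hq this
  · exact hjj

lemma evd {K : Type*} [Field K] (n : ℕ) (a : K) :
    (Polynomial.derivative ((X : K[X])^n)).eval a * a = n * a^n := by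
  cases n with
  | zero => simp
  | succ k =>
    rw [Polynomial.derivative_X_pow]
    simp [mul_assoc, ← pow_succ]

lemma sq_dvd {K : Type*} [Field K] {P : K[X]} {a : K}
    (h0 : P.IsRoot a) (h1 : P.derivative.IsRoot a) : (X - C a)^2 ∣ P := by
  obtain ⟨Q, rfl⟩ := Polynomial.dvd_iff_isRoot.2 h0
  have hD : Polynomial.derivative ((X - C a) * Q)
      = Q + (X - C a) * Polynomial.derivative Q := by
    rw [Polynomial.derivative_mul]; simp
  have hQ : Q.IsRoot a := by
    have := h1
    rw [Polynomial.IsRoot, hD] at this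
    simpa using this
  obtain ⟨Q', rfl⟩ := Polynomial.dvd_iff_isRoot.2 hQ
  exact ⟨Q', by ring⟩



lemma fixed_mem_range {F K : Type*} [Field F] [Fintype F] [Field K] [Fintype K]
    [Algebra F K] {q : ℕ} (hF : Fintype.card F = q) (x : K) (hx : x^q = x) :
    x ∈ Set.range (algebraMap F K) := by
  classical
  by_contra hmem
  have hq1 : 1 < q := hF ▸ Fintype.one_lt_card
  set S : Finset K := Finset.univ.image (algebraMap F K) with hS
  have hcardS : S.card = q := by
    rw [hS, Finset.card_image_of_injective _ (algebraMap F K).injective,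
      Finset.card_univ, hF]
  set f : K[X] := X^q - X with hf
  have hf0 : f ≠ 0 := FiniteField.X_pow_card_sub_X_ne_zero K hq1
  have hfdeg : f.natDegree = q := FiniteField.X_pow_card_sub_X_natDegree_eq K hq1
  have hroot : ∀ y ∈ insert x S, f.IsRoot y := by
    intro y hy
    rcases Finset.mem_insert.1 hy with rfl | hy
    · simp [hf, IsRoot, hx]
    · rw [hS, Finset.mem_image] at hy
      obtain ⟨z, -, rfl⟩ := hy
      have : (algebraMap F K z)^q = algebraMap F K z := by
        rw [← map_pow, ← hF, FiniteField.pow_card]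
      simp [hf, IsRoot, this]
  have hsub : insert x S ⊆ f.roots.toFinset := by
    intro y hy
    rw [Multiset.mem_toFinset, Polynomial.mem_roots hf0]
    exact hroot y hy
  have hxS : x ∉ S := by
    intro hxs
    rw [hS, Finset.mem_image] at hxs
    obtain ⟨z, -, rfl⟩ := hxs
    exact hmem ⟨z, rfl⟩
  have h1 : q + 1 ≤ f.roots.toFinset.card := by
    have hc : (insert x S).card = q + 1 := by
      rw [Finset.card_insert_of_notMem hxS, hcardS]
    have := Finset.card_le_card hsub
    omega
  have h2 : f.roots.toFinset.card ≤ q := by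
    calc f.roots.toFinset.card ≤ Multiset.card f.roots := f.roots.toFinset_card_le
    _ ≤ f.natDegree := f.card_roots'
    _ = q := hfdeg
  have := Finset.card_le_card hsub
  omega



lemma XL_root_count {K : Type*} [Field K] [Fintype K] {q r : ℕ}
    (hK : Fintype.card K = q^2) (P : K[X]) (hP : P ≠ 0)
    (mult : ℕ) (S : Finset K) (hSfix : ∀ a ∈ S, a^q = a)
    (hSdvd : ∀ a ∈ S, (X - C a)^mult ∣ P)
    (β : Fin r → K) (hβq : ∀ i, (β i)^q ≠ β i)
    (hβpair : ∀ i j, i ≠ j → β i ≠ β j ∧ β j ≠ β i ^ q)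
    (B : Finset (Fin r)) (hB : ∀ p ∈ B, P.IsRoot (β p))
    (hB' : ∀ p ∈ B, P.IsRoot (β p ^ q)) :
    mult * S.card + 2 * B.card ≤ P.natDegree := by
  classical
  have hqq : ∀ x : K, (x^q)^q = x := by
    intro x
    rw [← pow_mul, ← pow_two, ← hK, FiniteField.pow_card]
  have hfrob : Function.Injective (fun x : K => x^q) :=
    Function.LeftInverse.injective hqq
  have hβq2 : ∀ i, β i ^ q ∉ S := by
    intro i hmem
    have := hSfix _ hmem
    rw [hqq] at this
    exact hβq i this.symm
  have hβS : ∀ i, β i ∉ S := fun i hmem => hβq i (hSfix _ hmem)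
  have hβinj : Function.Injective β := by
    intro i j hij
    by_contra hne
    exact (hβpair i j hne).1 hij
  have hcross : ∀ i j, β i ≠ β j ^ q := by
    intro i j
    by_cases hij : i = j
    · subst hij; exact fun h => hβq i h.symm
    · exact (hβpair j i (Ne.symm hij)).2
  set M : Multiset K := mult • S.val + ((B.image β).val + (B.image (fun p => β p ^ q)).val)
    with hM
  have hle : M ≤ P.roots := by
    rw [Multiset.le_iff_count]
    intro x
    rw [Polynomial.count_roots]
    have c1 : Multiset.count x (mult • S.val) = if x ∈ S then mult else 0 := by
      rw [Multiset.count_nsmul, Multiset.count_eq_of_nodup S.nodup]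
      rw [if_congr (Iff.of_eq Finset.mem_val) rfl rfl]
      by_cases h : x ∈ S <;> simp [h]
    have c2 : Multiset.count x (B.image β).val
        = if x ∈ B.image β then 1 else 0 := by
      rw [Multiset.count_eq_of_nodup (B.image β).nodup]
      exact if_congr (Iff.of_eq Finset.mem_val) rfl rfl
    have c3 : Multiset.count x (B.image (fun p => β p ^ q)).val
        = if x ∈ B.image (fun p => β p ^ q) then 1 else 0 := by
      rw [Multiset.count_eq_of_nodup (B.image (fun p => β p ^ q)).nodup]
      exact if_congr (Iff.of_eq Finset.mem_val) rfl rfl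
    rw [hM, Multiset.count_add, Multiset.count_add, c1, c2, c3]
    by_cases h1 : x ∈ S
    · have h2 : x ∉ B.image β := by
        rw [Finset.mem_image]; rintro ⟨p, -, rfl⟩; exact hβS p h1
      have h3 : x ∉ B.image (fun p => β p ^ q) := by
        rw [Finset.mem_image]; rintro ⟨p, -, rfl⟩; exact hβq2 p h1
      simp only [h1, h2, h3, if_true, if_false]
      rw [(Polynomial.le_rootMultiplicity_iff hP)]
      simpa using hSdvd x h1
    · by_cases h2 : x ∈ B.image β
      · have h3 : x ∉ B.image (fun p => β p ^ q) := by
          rw [Finset.mem_image]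
          rintro ⟨p, -, h⟩
          rw [Finset.mem_image] at h2
          obtain ⟨p', -, rfl⟩ := h2
          exact hcross p' p h.symm
        simp only [h1, h2, h3, if_true, if_false]
        rw [Finset.mem_image] at h2
        obtain ⟨p, hp, rfl⟩ := h2
        have := (Polynomial.rootMultiplicity_pos hP).2 (hB p hp)
        omega
      · by_cases h3 : x ∈ B.image (fun p => β p ^ q)
        · simp only [h1, h2, h3, if_true, if_false]
          rw [Finset.mem_image] at h3
          obtain ⟨p, hp, rfl⟩ := h3
          have := (Polynomial.rootMultiplicity_pos hP).2 (hB' p hp)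
          omega
        · simp [h1, h2, h3]
  have hcardM : Multiset.card M = mult * S.card + 2 * B.card := by
    rw [hM]
    simp only [Multiset.card_add, Multiset.card_nsmul]
    have e1 : (B.image β).card = B.card := Finset.card_image_of_injective _ hβinj
    have e2 : (B.image (fun p => β p ^ q)).card = B.card :=
      Finset.card_image_of_injective _ (hfrob.comp hβinj)
    simp only [Finset.card] at e1 e2
    rw [e1, e2]
    simp only [Finset.card]
    ring
  calc mult * S.card + 2 * B.card = Multiset.card M := hcardM.symm
    _ ≤ Multiset.card P.roots := Multiset.card_le_card hle
    _ ≤ P.natDegree := P.card_roots'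




noncomputable def XLpoly (K : Type*) [Field K] (q i j : ℕ) : K[X] :=
  if i = j then X^(i*q+j) else X^(i*q+j) + X^(j*q+i)

noncomputable def XLQ (K : Type*) [Field K] (i j : ℕ) : K[X] :=
  C (if i = j then (1:K) else 2) * X^(i+j)

variable {K : Type*} [Field K] {q i j : ℕ}

lemma XLpoly_eval (x : K) : (XLpoly K q i j).eval x = ePoly K q i j x := by
  unfold XLpoly ePoly; split <;> simp

lemma XLpoly_natDegree_le (hij : i ≤ j) (hq : 1 ≤ q) :
    (XLpoly K q i j).natDegree ≤ j*q + i := by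
  have key : i*q + j ≤ j*q + i := by
    obtain ⟨d, rfl⟩ := Nat.exists_eq_add_of_le hij
    have h2 : d ≤ d * q := Nat.le_mul_of_pos_right d (by omega)
    have e : (i+d)*q = i*q + d*q := by ring
    omega
  unfold XLpoly
  split
  · subst ‹i = j›; simpa using natDegree_X_pow_le (R := K) (i*q+i)
  · refine (natDegree_add_le _ _).trans ?_
    simp only [natDegree_X_pow]
    omega

lemma pow_frob_eq {x : K} (hqq : (x^q)^q = x) (a b : ℕ) :
    (x^q)^(a*q+b) = x^(b*q+a) := by
  calc (x^q)^(a*q+b) = ((x^q)^q)^a * (x^q)^b := by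
        rw [pow_add, Nat.mul_comm a q, pow_mul]
    _ = x^a * x^(q*b) := by rw [hqq, ← pow_mul]
    _ = x^(b*q+a) := by rw [← pow_add]; congr 1; ring

lemma pow_fixed_eq {a : K} (ha : a^q = a) (b d : ℕ) : a^(b*q+d) = a^(b+d) := by
  calc a^(b*q+d) = (a^q)^b * a^d := by rw [pow_add, Nat.mul_comm b q, pow_mul]
    _ = a^(b+d) := by rw [ha, ← pow_add]

lemma XLpoly_eval_frob {x : K} (hqq : (x^q)^q = x) :
    (XLpoly K q i j).eval (x^q) = (XLpoly K q i j).eval x := by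
  unfold XLpoly
  split
  · simp only [eval_pow, eval_X]
    rw [pow_frob_eq hqq]
    subst ‹i = j›
    rfl
  · simp only [eval_add, eval_pow, eval_X]
    rw [pow_frob_eq hqq, pow_frob_eq hqq]
    exact add_comm _ _

lemma XLpoly_eval_fixed {a : K} (ha : a^q = a) :
    (XLpoly K q i j).eval a = (XLQ K i j).eval a := by
  unfold XLpoly XLQ
  split
  · simp [pow_fixed_eq ha]
  · simp only [eval_add, eval_pow, eval_X, eval_mul, eval_C]
    rw [pow_fixed_eq ha, pow_fixed_eq ha, Nat.add_comm j i]
    ring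

lemma XLQ_eval (a : K) : (XLQ K i j).eval a = (if i = j then (1:K) else 2) * a^(i+j) := by
  unfold XLQ; simp

lemma XLQ_natDegree_le : (XLQ K i j).natDegree ≤ i + j := by
  unfold XLQ
  refine (natDegree_mul_le).trans ?_
  simp

lemma XLQ_deriv_eval (c : K) (n : ℕ) (a : K) :
    (Polynomial.derivative (C c * X^n)).eval a * a = c * (n * a^n) := by
  rw [derivative_C_mul]
  cases n with
  | zero => simp
  | succ k =>
    rw [Polynomial.derivative_X_pow]
    simp only [eval_mul, eval_C, eval_natCast, Nat.cast_add, Nat.cast_one, eval_pow, eval_X,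
      Nat.add_sub_cancel]
    rw [pow_succ]
    ring

lemma XLpoly_deriv_eval {a : K} (ha : a^q = a) (hqK : (q:K) = 0) :
    2 * ((Polynomial.derivative (XLpoly K q i j)).eval a * a)
      = (Polynomial.derivative (XLQ K i j)).eval a * a := by
  have evd : ∀ (n : ℕ), (Polynomial.derivative ((X : K[X])^n)).eval a * a = n * a^n := by
    intro n
    have := XLQ_deriv_eval (1 : K) n a
    simpa using this
  have cast_eq : ∀ b d : ℕ, ((b*q+d : ℕ) : K) = (d : K) := by
    intro b d
    push_cast [hqK]
    ring
  rw [XLQ, XLQ_deriv_eval]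
  unfold XLpoly
  split
  · subst ‹i = j›
    rw [evd, cast_eq, pow_fixed_eq ha]
    push_cast
    ring
  · rw [derivative_add, eval_add, add_mul, evd, evd, cast_eq, cast_eq, pow_fixed_eq ha,
      pow_fixed_eq ha, Nat.add_comm j i]
    push_cast
    ring

lemma XLQ_coeff_one_rel (hij : i ≤ j) (hj : j < q) (hq2 : 2 ≤ q) :
    (XLQ K i j).coeff 1 = 2 * (XLpoly K q i j).coeff 1 := by
  by_cases hd : i = j
  · subst hd
    rw [XLQ, XLpoly, if_pos rfl, if_pos rfl, coeff_C_mul, coeff_X_pow, coeff_X_pow]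
    have h2 : ¬ (1 = i*q+i) := by
      intro h
      rcases Nat.eq_zero_or_pos i with h0 | h0
      · rw [h0] at h; simp at h
      · nlinarith
    have h3 : ¬ (1 = i + i) := by omega
    rw [if_neg h2, if_neg h3]
    ring
  · rw [XLQ, XLpoly, if_neg hd, if_neg hd, coeff_C_mul, coeff_add, coeff_X_pow, coeff_X_pow,
      coeff_X_pow]
    by_cases hij1 : i = 0 ∧ j = 1
    · obtain ⟨rfl, rfl⟩ := hij1
      rw [if_pos (by omega), if_pos (by omega), if_neg (by omega)]
      ring
    · have e2 : ¬ (1 = i*q + j) := by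
        intro h
        have hi0 : i = 0 := by nlinarith
        omega
      have e3 : ¬ (1 = j*q + i) := by
        intro h
        have hj0 : j = 0 := by nlinarith
        omega
      have e4 : ¬ (1 = i + j) := by omega
      rw [if_neg e2, if_neg e3, if_neg e4]
      ring

lemma XLpoly_coeff_unique {i' j' : ℕ} (hq2 : 2 ≤ q) (hij : i ≤ j) (hj : j < q)
    (hij' : i' ≤ j') (hj' : j' < q) :
    (XLpoly K q i' j').coeff (j*q + i) = if i' = i ∧ j' = j then 1 else 0 := by
  have hi : i < q := lt_of_le_of_lt hij hj
  have hi' : i' < q := lt_of_le_of_lt hij' hj'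
  unfold XLpoly
  by_cases hd : i' = j'
  · subst hd
    rw [if_pos rfl, coeff_X_pow]
    by_cases h : j*q + i = i'*q + i'
    · obtain ⟨h1, h2⟩ := digit_unique (by omega) hi hi' h
      rw [if_pos h, if_pos (by omega)]
    · rw [if_neg h, if_neg (by
        rintro ⟨rfl, rfl⟩
        exact h (by omega))]
  · rw [if_neg hd, coeff_add, coeff_X_pow, coeff_X_pow]
    by_cases h1 : j*q + i = i'*q + j'
    · exfalso
      obtain ⟨e1, e2⟩ := digit_unique (by omega) hi hj' h1
      omega
    · rw [if_neg h1]
      by_cases h2 : j*q + i = j'*q + i'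
      · obtain ⟨e1, e2⟩ := digit_unique (by omega) hi hi' h2
        rw [if_pos h2, if_pos (by omega)]
        exact zero_add 1
      · rw [if_neg h2, if_neg (by
          rintro ⟨rfl, rfl⟩
          exact h2 rfl)]
        simp

end XLAux

open Polynomial Finset

set_option maxHeartbeats 1000000 in
/-- **Xing–Ling**: for `0 ≤ t ≤ q`, `2 ≤ m ≤ q−1`, `0 ≤ ℓ ≤ m−1`, the code
`C_q(t,m,ℓ)` is a linear code over `F_q` of length `n = t + (q²−q)/2`, dimension
`m(m−1)/2 + ℓ + 1`, and minimum distance at least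
`δ = n − (q(m−1) + ℓ + g)/2`, with `g` as in the statement. -/
theorem statement12 {q t m ℓ : ℕ}
    (hq : ∃ p e : ℕ, p.Prime ∧ 0 < e ∧ q = p ^ e)
    (ht : t ≤ q) (hm2 : 2 ≤ m) (hmq : m ≤ q - 1) (hℓ : ℓ ≤ m - 1)
    (F K : Type*) [Field F] [Fintype F] [DecidableEq F]
    [Field K] [Fintype K] [Algebra F K]
    (hF : Fintype.card F = q) (hK : Fintype.card K = q ^ 2)
    (r : ℕ) (hr : 2 * r = q ^ 2 - q)
    -- `α_1, …, α_t` are distinct elements of the subfield `F ⊆ K`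
    (α : Fin t → K) (hαinj : Function.Injective α)
    (hαF : ∀ i, α i ∈ Set.range (algebraMap F K))
    -- `β_1, …, β_r` contain exactly one element of each conjugate pair in `K∖F`
    (β : Fin r → K) (hβF : ∀ i, β i ∉ Set.range (algebraMap F K))
    (hβ : ∀ i j, i ≠ j → β i ≠ β j ∧ β j ≠ β i ^ q)
    -- the values of the `e_{i,j}` lie in `F`; `E` is the `F`-valued evaluation
    (E : ℕ → ℕ → K → F)
    (hE : ∀ i j x, algebraMap F K (E i j x) = ePoly K q i j x)
    (C : Submodule F (Fin t ⊕ Fin r → F))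
    (hC : C = Submodule.span F (XLgen F K α β E m ℓ))
    (g : ℤ)
    (hg : g = if Odd q then min (max (2 * ((m : ℤ) - 2)) ((m : ℤ) + ℓ - 1)) (t : ℤ)
      else if ℓ ≤ m - 2 then max (min ((m : ℤ) - 2) (t : ℤ)) (2 * (t : ℤ) - q)
      else max (min ((m : ℤ) - 1) (t : ℤ)) (2 * (t : ℤ) - q))
    (δ : ℚ)
    (hδ : δ = (t + r : ℚ) - ((q : ℚ) * ((m : ℚ) - 1) + (ℓ : ℚ) + (g : ℚ)) / 2) :
    Module.finrank F C = m * (m - 1) / 2 + ℓ + 1 ∧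
    ∀ v ∈ C, v ≠ 0 → δ ≤ (hammingNorm v : ℚ) := by
  classical
  obtain ⟨p, e, hpp, hee, hqpe⟩ := hq
  have hq2 : 2 ≤ q := by
    rw [hqpe]
    calc 2 = 2^1 := rfl
    _ ≤ p^e := Nat.pow_le_pow_left hpp.two_le e |>.trans' (Nat.pow_le_pow_right (by omega) hee)
  obtain ⟨m', rfl⟩ : ∃ m', m = m' + 2 := ⟨m - 2, by omega⟩
  have hq3 : m' + 3 ≤ q := by omega
  have hℓ1 : ℓ ≤ m' + 1 := by omega
  -- basic field facts
  have hqK : (q : K) = 0 := by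
    have h1 : ((Fintype.card K : ℕ) : K) = 0 := FiniteField.cast_card_eq_zero K
    rw [hK] at h1
    push_cast at h1
    exact pow_eq_zero_iff (by omega) |>.mp h1
  have hKfix : ∀ x : K, (x^q)^q = x := by
    intro x
    rw [← pow_mul, ← pow_two, ← hK, FiniteField.pow_card]
  have hrange_fix : ∀ x ∈ Set.range (algebraMap F K), x^q = x := by
    rintro x ⟨z, rfl⟩
    rw [← map_pow, ← hF, FiniteField.pow_card]
  have hαfix : ∀ i, (α i)^q = α i := fun i => hrange_fix _ (hαF i)
  have hβfix : ∀ i, (β i)^q ≠ β i := fun i h => hβF i (fixed_mem_range hF _ h)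
  -- the subfield as a finset
  set S0 : Finset K := Finset.univ.image (algebraMap F K) with hS0
  have hS0card : S0.card = q := by
    rw [hS0, Finset.card_image_of_injective _ (algebraMap F K).injective,
      Finset.card_univ, hF]
  have hS0fix : ∀ a ∈ S0, a^q = a := by
    intro a ha
    rw [hS0, Finset.mem_image] at ha
    obtain ⟨z, -, rfl⟩ := ha
    exact hrange_fix _ ⟨z, rfl⟩
  have hαinS0 : ∀ i, α i ∈ S0 := by
    intro i
    obtain ⟨z, hz⟩ := hαF i
    rw [hS0, Finset.mem_image]
    exact ⟨z, Finset.mem_univ z, hz⟩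
  constructor
  · -- dimension
    set TRI : Finset (ℕ×ℕ) := ((Finset.range (m'+1)) ×ˢ (Finset.range (m'+1))).filter
      (fun pr => pr.1 ≤ pr.2) with hTRI
    set TOP : Finset (ℕ×ℕ) := (Finset.range (ℓ+1)).image (fun i => (i, m'+1)) with hTOP
    set Idx : Finset (ℕ×ℕ) := TRI ∪ TOP with hIdx
    have hdisj : Disjoint TRI TOP := by
      rw [Finset.disjoint_left]
      intro pr h1 h2
      rw [hTRI, Finset.mem_filter, Finset.mem_product] at h1
      rw [hTOP, Finset.mem_image] at h2
      obtain ⟨i, hi, rfl⟩ := h2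
      have := Finset.mem_range.mp h1.1.2
      omega
    have hIcard : Idx.card = (m'+2)*(m'+1)/2 + ℓ + 1 := by
      rw [hIdx, Finset.card_union_of_disjoint hdisj]
      have h1 : TRI.card = (m'+1)*(m'+2)/2 := tri_card (m'+1)
      have h2 : TOP.card = ℓ + 1 := by
        rw [hTOP, Finset.card_image_of_injective _ (fun a b hab => by
          simpa using congrArg Prod.fst hab), Finset.card_range]
      rw [h1, h2]
      have h3 : (m'+1)*(m'+2) = (m'+2)*(m'+1) := by ring
      omega
    set φ : ℕ×ℕ → (Fin t ⊕ Fin r → F) :=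
      fun pr => (fun pp => E pr.1 pr.2 (Sum.elim α β pp)) with hφ
    have hmem_struct : ∀ pr ∈ Idx,
        pr.1 ≤ pr.2 ∧ pr.2 ≤ m'+1 ∧ (pr.2 ≤ m' ∨ (pr.2 = m'+1 ∧ pr.1 ≤ ℓ)) := by
      intro pr hpr
      rw [hIdx, Finset.mem_union] at hpr
      rcases hpr with h | h
      · rw [hTRI, Finset.mem_filter, Finset.mem_product] at h
        have h1 := Finset.mem_range.mp h.1.1
        have h2 := Finset.mem_range.mp h.1.2
        exact ⟨h.2, by omega, Or.inl (by omega)⟩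
      · rw [hTOP, Finset.mem_image] at h
        obtain ⟨i, hi, rfl⟩ := h
        have := Finset.mem_range.mp hi
        exact ⟨by omega, le_rfl, Or.inr ⟨rfl, by omega⟩⟩
    have hXL : XLgen F K α β E (m'+2) ℓ = φ '' ↑Idx := by
      ext wv
      constructor
      · rintro (⟨i, j, hij, hjm, rfl⟩ | ⟨i, hiℓ, rfl⟩)
        · refine ⟨(i,j), ?_, by rw [hφ]⟩
          rw [Finset.mem_coe, hIdx, Finset.mem_union]
          left
          rw [hTRI, Finset.mem_filter, Finset.mem_product]
          refine ⟨⟨Finset.mem_range.mpr ?_, Finset.mem_range.mpr ?_⟩, hij⟩ <;> omega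
        · refine ⟨(i, m'+1), ?_, ?_⟩
          · rw [Finset.mem_coe, hIdx, Finset.mem_union]
            right
            rw [hTOP, Finset.mem_image]
            exact ⟨i, Finset.mem_range.mpr (by omega), rfl⟩
          · rw [hφ]
            have hm1 : m' + 2 - 1 = m' + 1 := by omega
            rw [hm1]
      · rintro ⟨pr, hpr, rfl⟩
        rw [Finset.mem_coe, hIdx, Finset.mem_union] at hpr
        rcases hpr with h | h
        · left
          rw [hTRI, Finset.mem_filter, Finset.mem_product] at h
          have h2 := Finset.mem_range.mp h.1.2
          exact ⟨pr.1, pr.2, h.2, by omega, by rw [hφ]⟩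
        · right
          rw [hTOP, Finset.mem_image] at h
          obtain ⟨i, hi, rfl⟩ := h
          refine ⟨i, by have := Finset.mem_range.mp hi; omega, ?_⟩
          rw [hφ]
          have hm1 : m' + 2 - 1 = m' + 1 := by omega
          rw [hm1]
    -- linear independence of the generators
    have hli : ∀ (f : ℕ×ℕ → F), (∑ pr ∈ Idx, f pr • φ pr) = 0 → ∀ pr ∈ Idx, f pr = 0 := by
      intro f hsum pr hpr
      set P : K[X] := ∑ pr ∈ Idx, (algebraMap F K (f pr)) • XLpoly K q pr.1 pr.2 with hP
      have heval : ∀ pp : Fin t ⊕ Fin r, P.eval (Sum.elim α β pp) = 0 := by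
        intro pp
        have h0 : (∑ pr ∈ Idx, f pr • φ pr) pp = 0 := by rw [hsum]; rfl
        rw [Finset.sum_apply] at h0
        have h1 : P.eval (Sum.elim α β pp)
            = algebraMap F K (∑ pr ∈ Idx, (f pr • φ pr) pp) := by
          rw [hP, eval_finset_sum, map_sum]
          refine Finset.sum_congr rfl fun pr' _ => ?_
          rw [eval_smul, smul_eq_mul, Pi.smul_apply, smul_eq_mul, map_mul, hφ]
          congr 1
          rw [hE, XLpoly_eval]
        rw [h1, h0, map_zero]
      have hPdeg : P.natDegree ≤ (m'+1)*q + ℓ := by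
        rw [hP]
        refine natDegree_sum_le_of_forall_le _ _ fun pr' hpr' => ?_
        obtain ⟨e1, e2, e3⟩ := hmem_struct pr' hpr'
        refine (natDegree_smul_le _ _).trans ?_
        refine (XLpoly_natDegree_le e1 (by omega)).trans ?_
        rcases e3 with h | ⟨h1, h2⟩
        · have f1 : pr'.2 * q ≤ m' * q := Nat.mul_le_mul_right q h
          have f2 : m' * q + q = (m'+1) * q := by ring
          omega
        · rw [h1]
          omega
      have hProotα : ∀ pp : Fin t, P.IsRoot (α pp) := fun pp => heval (Sum.inl pp)
      have hProotβ : ∀ pp : Fin r, P.IsRoot (β pp) := fun pp => heval (Sum.inr pp)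
      have hProotβ' : ∀ pp : Fin r, P.IsRoot (β pp ^ q) := by
        intro pp
        have h1 := hProotβ pp
        unfold IsRoot at h1 ⊢
        rw [hP, eval_finset_sum] at h1 ⊢
        rw [← h1]
        refine Finset.sum_congr rfl fun pr' _ => ?_
        rw [eval_smul, eval_smul, XLpoly_eval_frob (hKfix (β pp))]
      have hP0 : P = 0 := by
        by_contra hne
        have hhyp : ∀ a ∈ Finset.univ.image α, (X - Polynomial.C a)^1 ∣ P := by
          intro a ha
          rw [Finset.mem_image] at ha
          obtain ⟨pp, -, rfl⟩ := ha
          rw [pow_one]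
          exact dvd_iff_isRoot.mpr (hProotα pp)
        have hfix : ∀ a ∈ Finset.univ.image α, a^q = a := by
          intro a ha
          rw [Finset.mem_image] at ha
          obtain ⟨pp, -, rfl⟩ := ha
          exact hαfix pp
        have hcnt := XL_root_count hK P hne 1 (Finset.univ.image α) hfix hhyp β hβfix hβ
          Finset.univ (fun pp _ => hProotβ pp) (fun pp _ => hProotβ' pp)
        rw [Finset.card_image_of_injective _ hαinj, one_mul, Finset.card_univ,
          Finset.card_univ, Fintype.card_fin, Fintype.card_fin] at hcnt
        have hcnt2 : t + 2*r ≤ (m'+1)*q + ℓ := hcnt.trans hPdeg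
        have hq3Z : (m':ℤ) + 3 ≤ q := by exact_mod_cast hq3
        have hℓZ : (ℓ:ℤ) ≤ m' + 1 := by exact_mod_cast hℓ1
        have hrZ : 2*(r:ℤ) = (q:ℤ)^2 - q := by
          have h4 : q ≤ q^2 := Nat.le_self_pow (by omega) q
          have := hr
          zify [h4] at this
          linarith
        have hcnt2Z : (t:ℤ) + 2*r ≤ ((m'+1):ℤ)*q + ℓ := by exact_mod_cast hcnt2
        have hqZ : (0:ℤ) ≤ q := by positivity
        have hint : ((q:ℤ) - (m'+3)) * q ≥ 0 :=
          mul_nonneg (by linarith) hqZ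
        have htZ : (0:ℤ) ≤ t := by positivity
        nlinarith
      have hc : algebraMap F K (f pr) = P.coeff (pr.2 * q + pr.1) := by
        obtain ⟨e1, e2, -⟩ := hmem_struct pr hpr
        rw [hP, finset_sum_coeff]
        rw [Finset.sum_eq_single pr]
        · rw [coeff_smul, XLpoly_coeff_unique hq2 e1 (by omega) e1 (by omega),
            if_pos ⟨rfl, rfl⟩, smul_eq_mul, mul_one]
        · intro pr' hpr' hne
          obtain ⟨f1, f2, -⟩ := hmem_struct pr' hpr'
          rw [coeff_smul, XLpoly_coeff_unique hq2 e1 (by omega) f1 (by omega),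
            if_neg (by
              rintro ⟨g1, g2⟩
              exact hne (Prod.ext g1 g2)), smul_zero]
        · intro h
          exact absurd hpr h
      rw [hP0, coeff_zero] at hc
      exact (map_eq_zero_iff _ (algebraMap F K).injective).mp hc
    have hliF : LinearIndependent F (fun pr : {x // x ∈ Idx} => φ ↑pr) := by
      rw [Fintype.linearIndependent_iff]
      intro gg hgg
      set f : ℕ×ℕ → F := fun pr => if h : pr ∈ Idx then gg ⟨pr, h⟩ else 0 with hf
      have hs : ∑ pr ∈ Idx, f pr • φ pr = 0 := by
        calc ∑ pr ∈ Idx, f pr • φ pr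
            = ∑ x ∈ Idx.attach, f ↑x • φ ↑x := (Finset.sum_attach Idx _).symm
          _ = ∑ x ∈ Idx.attach, gg x • φ ↑x := Finset.sum_congr rfl fun x _ => by
              rw [hf]; simp [x.2]
          _ = 0 := by rw [← Finset.univ_eq_attach]; exact hgg
      intro i
      have := hli f hs ↑i i.2
      rw [hf] at this
      simpa [i.2] using this
    have hinj : Set.InjOn φ ↑Idx := by
      intro a ha b hb hab
      have h1 := hliF.injective (a₁ := ⟨a, ha⟩) (a₂ := ⟨b, hb⟩) hab
      exact congrArg Subtype.val h1
    rw [hC, hXL]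
    have hrange : Set.range (fun pr : {x // x ∈ Idx} => φ ↑pr) = φ '' ↑Idx := by
      ext y
      constructor
      · rintro ⟨x, rfl⟩
        exact ⟨↑x, Finset.mem_coe.mpr x.2, rfl⟩
      · rintro ⟨x, hx, rfl⟩
        exact ⟨⟨x, Finset.mem_coe.mp hx⟩, rfl⟩
    have hindset : LinearIndependent F
        ((↑) : (φ '' ↑Idx : Set (Fin t ⊕ Fin r → F)) → (Fin t ⊕ Fin r → F)) := by
      have h1 := hliF.linearIndepOn_id
      rwa [hrange] at h1
    have hco : φ '' ↑Idx = ↑(Idx.image φ) := (Finset.coe_image).symm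
    rw [hco]
    rw [hco] at hindset
    rw [finrank_span_finset_eq_card (s := Idx.image φ) hindset]
    rw [Finset.card_image_of_injOn hinj, hIcard]
    have hmm : m'+2-1 = m'+1 := by omega
    rw [hmm]
  · -- distance
    intro v hv hvne
    rw [hC] at hv
    obtain ⟨n, c, w, hvsum⟩ := Submodule.mem_span_set'.mp hv
    have hw : ∀ k : Fin n, ∃ i jj : ℕ, i ≤ jj ∧ jj ≤ m'+1 ∧ (jj ≤ m' ∨ (jj = m'+1 ∧ i ≤ ℓ)) ∧
        (w k : Fin t ⊕ Fin r → F) = fun pp => E i jj (Sum.elim α β pp) := by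
      intro k
      have hmem := (w k).2
      rcases hmem with h | h
      · obtain ⟨i, jj, hij, hjm, hwk⟩ := h
        have hjm' : jj ≤ m' := by omega
        exact ⟨i, jj, hij, by omega, Or.inl hjm', hwk⟩
      · obtain ⟨i, hiℓ, hwk⟩ := h
        have hm1 : m' + 2 - 1 = m' + 1 := by omega
        rw [hm1] at hwk
        exact ⟨i, m'+1, by omega, le_rfl, Or.inr ⟨rfl, hiℓ⟩, hwk⟩
    choose I J hIJ1 hIJ2 hIJ3 hIJ4 using hw
    set D : ℕ := (m'+1)*q + ℓ with hD
    set P : K[X] := ∑ k : Fin n, (algebraMap F K (c k)) • XLpoly K q (I k) (J k) with hP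
    have heval : ∀ pp : Fin t ⊕ Fin r, P.eval (Sum.elim α β pp) = algebraMap F K (v pp) := by
      intro pp
      have hv' : v pp = ∑ k, c k * (w k : Fin t ⊕ Fin r → F) pp := by
        rw [← hvsum]
        simp [Finset.sum_apply]
      rw [hv', map_sum, hP, eval_finset_sum]
      refine Finset.sum_congr rfl fun k _ => ?_
      rw [map_mul, eval_smul, smul_eq_mul]
      congr 1
      rw [hIJ4 k]
      rw [hE, XLpoly_eval]
    have hPdeg : P.natDegree ≤ D := by
      rw [hP]
      refine natDegree_sum_le_of_forall_le _ _ fun k _ => ?_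
      refine (natDegree_smul_le _ _).trans ?_
      refine (XLpoly_natDegree_le (hIJ1 k) (by omega)).trans ?_
      rcases hIJ3 k with h | ⟨h1, h2⟩
      · have e1 : J k * q ≤ m' * q := Nat.mul_le_mul_right q h
        have e2 : m' * q + q = (m'+1) * q := by ring
        have e3 := hIJ2 k
        have e4 := hIJ1 k
        rw [hD]
        omega
      · rw [h1, hD]
        omega
    have hPzero : P = 0 → v = 0 := by
      intro h0
      funext pp
      have := heval pp
      rw [h0] at this
      simp only [eval_zero] at this
      have := (algebraMap F K).injective (by rw [← this, map_zero] : algebraMap F K (v pp) = algebraMap F K 0)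
      simpa using this
    have hPne : P ≠ 0 := fun h0 => hvne (hPzero h0)
    set A : Finset (Fin t) := Finset.univ.filter (fun pp => v (Sum.inl pp) = 0) with hA
    set B : Finset (Fin r) := Finset.univ.filter (fun pp => v (Sum.inr pp) = 0) with hB
    have hAroot : ∀ pp ∈ A, P.IsRoot (α pp) := by
      intro pp hpp
      rw [hA, Finset.mem_filter] at hpp
      have := heval (Sum.inl pp)
      rw [hpp.2] at this
      simpa [IsRoot] using this
    have hBroot : ∀ pp ∈ B, P.IsRoot (β pp) := by
      intro pp hpp
      rw [hB, Finset.mem_filter] at hpp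
      have := heval (Sum.inr pp)
      rw [hpp.2] at this
      simpa [IsRoot] using this
    have hBroot' : ∀ pp ∈ B, P.IsRoot (β pp ^ q) := by
      intro pp hpp
      have h1 := hBroot pp hpp
      unfold IsRoot at h1 ⊢
      rw [hP] at h1 ⊢
      rw [eval_finset_sum] at h1 ⊢
      rw [← h1]
      refine Finset.sum_congr rfl fun k _ => ?_
      rw [eval_smul, eval_smul, XLpoly_eval_frob (hKfix (β pp))]
    have hAt : A.card ≤ t := by
      calc A.card ≤ Finset.univ.card := Finset.card_filter_le _ _
      _ = t := by simp
    -- main count : a + 2b ≤ D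
    have count1 : A.card + 2 * B.card ≤ D := by
      have hhyp : ∀ a ∈ A.image α, (X - Polynomial.C a)^1 ∣ P := by
        intro a ha
        rw [Finset.mem_image] at ha
        obtain ⟨pp, hpp, rfl⟩ := ha
        rw [pow_one]
        exact dvd_iff_isRoot.mpr (hAroot pp hpp)
      have hfix : ∀ a ∈ A.image α, a^q = a := by
        intro a ha
        rw [Finset.mem_image] at ha
        obtain ⟨pp, -, rfl⟩ := ha
        exact hαfix pp
      have := XL_root_count hK P hPne 1 (A.image α) hfix hhyp β hβfix hβ B hBroot hBroot'
      rw [Finset.card_image_of_injective _ hαinj, one_mul] at this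
      exact this.trans hPdeg
    -- hamming norm
    have hham : hammingNorm v + (A.card + B.card) = t + r := by
      have h1 : hammingNorm v = (Finset.univ.filter (fun pp => ¬ v pp = 0)).card := by
        simp only [hammingNorm, ne_eq]
      have h2 : (Finset.univ.filter (fun pp => v pp = 0)).card = A.card + B.card := by
        have : (Finset.univ.filter (fun pp : Fin t ⊕ Fin r => v pp = 0)) = A.disjSum B := by
          ext pp
          cases pp with
          | inl x => simp [hA, Finset.inl_mem_disjSum]
          | inr x => simp [hB, Finset.inr_mem_disjSum]
        rw [this, Finset.card_disjSum]
      have h3 := Finset.card_filter_add_card_filter_not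
        (s := (Finset.univ : Finset (Fin t ⊕ Fin r))) (p := fun pp => v pp = 0)
      simp only [Finset.card_univ, Fintype.card_sum, Fintype.card_fin] at h3
      rw [h1]
      rw [h2] at h3
      omega
    have key : 2 * ((A.card : ℤ) + B.card) ≤ (D : ℤ) + g := by
      by_cases hodd : Odd q
      · -- odd characteristic
        have h2K : (2:K) ≠ 0 := by
          intro h2
          obtain ⟨u, hu⟩ := hodd
          have hz : ((q + 1 : ℕ) : K) = 0 := by
            have h2u : (q+1) = 2*(u+1) := by omega
            rw [h2u]
            push_cast [h2]
            ring
          rw [Nat.cast_add, hqK, Nat.cast_one, zero_add] at hz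
          exact one_ne_zero hz
        set Q : K[X] := ∑ k : Fin n, (algebraMap F K (c k)) • XLQ K (I k) (J k) with hQ
        have hQeval : ∀ a : K, a^q = a → Q.eval a = P.eval a := by
          intro a ha
          rw [hP, hQ, eval_finset_sum, eval_finset_sum]
          exact Finset.sum_congr rfl fun k _ => by
            rw [eval_smul, eval_smul, XLpoly_eval_fixed ha]
        have hQdeg : Q.natDegree ≤ max (2*m') (m'+1+ℓ) := by
          rw [hQ]
          refine natDegree_sum_le_of_forall_le _ _ fun k _ => ?_
          refine (natDegree_smul_le _ _).trans (XLQ_natDegree_le.trans ?_)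
          have e1 := hIJ1 k
          rcases hIJ3 k with h | ⟨h1, h2⟩
          · omega
          · omega
        by_cases hQ0 : Q = 0
        · -- P vanishes to order 2 on the subfield
          have hcoeff1 : P.coeff 1 = 0 := by
            have hrel : Q.coeff 1 = 2 * P.coeff 1 := by
              rw [hP, hQ, finset_sum_coeff, finset_sum_coeff, Finset.mul_sum]
              refine Finset.sum_congr rfl fun k _ => ?_
              rw [coeff_smul, coeff_smul,
                XLQ_coeff_one_rel (hIJ1 k) (by have := hIJ2 k; omega) hq2, smul_eq_mul,
                smul_eq_mul]
              ring
            rw [hQ0] at hrel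
            simp only [coeff_zero] at hrel
            rcases mul_eq_zero.mp hrel.symm with h | h
            · exact absurd h h2K
            · exact h
          have hder : ∀ a ∈ S0, (Polynomial.derivative P).IsRoot a := by
            intro a ha
            have hfix := hS0fix a ha
            by_cases ha0 : a = 0
            · subst ha0
              unfold IsRoot
              rw [← coeff_zero_eq_eval_zero]
              simp [coeff_derivative, hcoeff1]
            · have hsum : ∀ (W : Fin n → K[X]),
                  (Polynomial.derivative (∑ k : Fin n, (algebraMap F K (c k)) • W k)).eval a * a
                  = ∑ k : Fin n, (algebraMap F K (c k))
                      * ((Polynomial.derivative (W k)).eval a * a) := by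
                intro W
                rw [map_sum, eval_finset_sum, Finset.sum_mul]
                exact Finset.sum_congr rfl fun k _ => by
                  rw [derivative_smul, eval_smul, smul_eq_mul]
                  ring
              have h1 : 2 * ((Polynomial.derivative P).eval a * a)
                  = (Polynomial.derivative Q).eval a * a := by
                rw [hP, hQ, hsum, hsum, Finset.mul_sum]
                exact Finset.sum_congr rfl fun k _ => by
                  rw [← XLpoly_deriv_eval hfix hqK]
                  ring
              rw [hQ0] at h1
              simp only [map_zero, eval_zero, zero_mul] at h1
              have h2 : (Polynomial.derivative P).eval a * a = 0 := by
                rcases mul_eq_zero.mp h1 with h | h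
                · exact absurd h h2K
                · exact h
              rcases mul_eq_zero.mp h2 with h | h
              · exact h
              · exact absurd h ha0
          have hdvd : ∀ a ∈ S0, (X - Polynomial.C a)^2 ∣ P := by
            intro a ha
            refine sq_dvd ?_ (hder a ha)
            unfold IsRoot
            rw [← hQeval a (hS0fix a ha), hQ0]
            simp
          have hcnt := XL_root_count hK P hPne 2 S0 hS0fix hdvd β hβfix hβ B hBroot hBroot'
          rw [hS0card] at hcnt
          have hcnt2 : 2*q + 2*B.card ≤ D := hcnt.trans hPdeg
          have hg0 : 0 ≤ g := by
            rw [hg, if_pos hodd]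
            push_cast
            omega
          have h2 : (A.card : ℤ) ≤ t := by exact_mod_cast hAt
          have h3 : (t:ℤ) ≤ q := by exact_mod_cast ht
          have h1 : ((2*q + 2*B.card : ℕ) : ℤ) ≤ D := by exact_mod_cast hcnt2
          push_cast at h1
          linarith
        · -- Q ≠ 0 : the α-zeros are roots of Q
          have hQroots : A.card ≤ Q.natDegree := by
            have hsub : A.image α ⊆ Q.roots.toFinset := by
              intro a ha
              rw [Finset.mem_image] at ha
              obtain ⟨pp, hpp, rfl⟩ := ha
              rw [Multiset.mem_toFinset, mem_roots hQ0]
              unfold IsRoot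
              rw [hQeval _ (hαfix pp)]
              exact hAroot pp hpp
            calc A.card = (A.image α).card :=
                  (Finset.card_image_of_injective _ hαinj).symm
              _ ≤ Q.roots.toFinset.card := Finset.card_le_card hsub
              _ ≤ Multiset.card Q.roots := Q.roots.toFinset_card_le
              _ ≤ Q.natDegree := Q.card_roots'
          have hAg : (A.card : ℤ) ≤ g := by
            rw [hg, if_pos hodd]
            have h1 : A.card ≤ max (2*m') (m'+1+ℓ) := hQroots.trans hQdeg
            have h2 : (A.card:ℤ) ≤ t := by exact_mod_cast hAt
            push_cast
            push_cast at h1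
            omega
          have h1 : ((A.card + 2*B.card : ℕ) : ℤ) ≤ D := by exact_mod_cast count1
          push_cast at h1
          linarith
      · -- even characteristic
        have hp2 : p = 2 := by
          rcases hpp.eq_two_or_odd' with h | hoddp
          · exact h
          · exact absurd (hqpe ▸ hoddp.pow) hodd
        have h2K : (2:K) = 0 := by
          have hz : ((2:ℕ):K)^e = 0 := by
            rw [← Nat.cast_pow, ← hp2, ← hqpe]
            exact hqK
          push_cast at hz
          exact pow_eq_zero_iff (by omega) |>.mp hz
        have hchar : ringChar K = 2 := by
          have hdvd : ringChar K ∣ 2 := ringChar.dvd (by exact_mod_cast h2K)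
          have h0 : ringChar K ≠ 0 := CharP.char_ne_zero_of_finite K (ringChar K)
          have h1 : ringChar K ≠ 1 := CharP.ringChar_ne_one
          rcases (Nat.dvd_prime Nat.prime_two).mp hdvd with h | h
          · exact absurd h h1
          · exact h
        haveI hC2 : CharP K 2 := hchar ▸ ringChar.charP K
        haveI : Fact (Nat.Prime 2) := ⟨Nat.prime_two⟩
        set d : Fin n → K := fun k => (algebraMap F K (c k))^(q^2/2) with hd
        have hdsq : ∀ k, d k ^ 2 = algebraMap F K (c k) := by
          intro k
          have hdq : 2 ∣ q := by
            rw [hqpe, hp2]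
            exact dvd_pow_self 2 (by omega)
          have h2q : 2 ∣ q^2 := by
            rw [pow_two]
            exact dvd_mul_of_dvd_left hdq q
          rw [hd, ← pow_mul, Nat.div_mul_cancel h2q, ← hK, FiniteField.pow_card]
        set R : K[X] := ∑ k : Fin n, (if I k = J k then d k • (X:K[X])^(I k) else 0) with hR
        have hReval : ∀ a : K, a^q = a → P.eval a = (R.eval a)^2 := by
          intro a ha
          rw [hR, hP, eval_finset_sum, eval_finset_sum, sum_pow_char (p := 2)]
          refine Finset.sum_congr rfl fun k _ => ?_
          rw [eval_smul, XLpoly_eval_fixed ha, XLQ_eval, smul_eq_mul]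
          by_cases hdk : I k = J k
          · rw [if_pos hdk, if_pos hdk, eval_smul, smul_eq_mul, mul_pow, hdsq, eval_pow,
              eval_X, ← pow_mul, one_mul]
            have hexp : I k * 2 = I k + J k := by omega
            rw [hexp]
          · rw [if_neg hdk, if_neg hdk, eval_zero]
            have h22 : (2:K) * a^(I k + J k) = 0 := by rw [h2K, zero_mul]
            rw [h22]
            ring
        have hRdeg : R.natDegree ≤ (if ℓ = m'+1 then m'+1 else m') := by
          rw [hR]
          refine natDegree_sum_le_of_forall_le _ _ fun k _ => ?_
          by_cases hdk : I k = J k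
          · rw [if_pos hdk]
            refine (natDegree_smul_le _ _).trans ?_
            rw [natDegree_X_pow]
            have e1 := hIJ1 k
            rcases hIJ3 k with h | ⟨h1, h2⟩
            · split <;> omega
            · have hll : ℓ = m'+1 := by omega
              rw [if_pos hll]
              omega
          · rw [if_neg hdk]
            simp
        by_cases hR0 : R = 0
        · -- P vanishes on the subfield
          have hdvd : ∀ a ∈ S0, (X - Polynomial.C a)^1 ∣ P := by
            intro a ha
            rw [pow_one]
            refine dvd_iff_isRoot.mpr ?_
            unfold IsRoot
            rw [hReval a (hS0fix a ha), hR0]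
            simp
          have hcnt := XL_root_count hK P hPne 1 S0 hS0fix hdvd β hβfix hβ B hBroot hBroot'
          rw [hS0card, one_mul] at hcnt
          have hcnt2 : q + 2*B.card ≤ D := hcnt.trans hPdeg
          have hgge : 2*(t:ℤ) - q ≤ g := by
            rw [hg, if_neg hodd]
            split
            · exact le_max_right _ _
            · exact le_max_right _ _
          have h2 : (A.card : ℤ) ≤ t := by exact_mod_cast hAt
          have h1 : ((q + 2*B.card : ℕ):ℤ) ≤ D := by exact_mod_cast hcnt2
          push_cast at h1
          linarith
        · -- R ≠ 0
          have hRroots : A.card ≤ R.natDegree := by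
            have hsub : A.image α ⊆ R.roots.toFinset := by
              intro a ha
              rw [Finset.mem_image] at ha
              obtain ⟨pp, hpp, rfl⟩ := ha
              rw [Multiset.mem_toFinset, mem_roots hR0]
              unfold IsRoot
              have h1 : (R.eval (α pp))^2 = 0 := by
                rw [← hReval _ (hαfix pp)]
                exact hAroot pp hpp
              exact pow_eq_zero_iff (by omega) |>.mp h1
            calc A.card = (A.image α).card :=
                (Finset.card_image_of_injective _ hαinj).symm
              _ ≤ R.roots.toFinset.card := Finset.card_le_card hsub
              _ ≤ Multiset.card R.roots := R.roots.toFinset_card_le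
              _ ≤ R.natDegree := R.card_roots'
          have hAg : (A.card : ℤ) ≤ g := by
            rw [hg, if_neg hodd]
            have h1 : A.card ≤ (if ℓ = m'+1 then m'+1 else m') := hRroots.trans hRdeg
            have h2 : (A.card:ℤ) ≤ t := by exact_mod_cast hAt
            by_cases hll : ℓ ≤ m'+2-2
            · rw [if_pos hll]
              rw [if_neg (by omega : ¬ ℓ = m'+1)] at h1
              refine le_max_of_le_left ?_
              push_cast
              omega
            · rw [if_neg hll]
              rw [if_pos (by omega : ℓ = m'+1)] at h1
              refine le_max_of_le_left ?_
              push_cast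
              omega
          have h1 : ((A.card + 2*B.card : ℕ) : ℤ) ≤ D := by exact_mod_cast count1
          push_cast at h1
          linarith
    -- conclude
    have key' : 2*((A.card:ℚ) + B.card) ≤ (((m'+1)*q + ℓ : ℕ) : ℚ) + g := by
      have h1 : ((2 * ((A.card : ℤ) + B.card) : ℤ) : ℚ) ≤ (((D : ℤ) + g : ℤ) : ℚ) :=
        Int.cast_le.mpr key
      rw [hD] at h1
      push_cast at h1 ⊢
      linarith
    have hhamQ : (hammingNorm v : ℚ) + ((A.card : ℚ) + B.card) = t + r := by
      exact_mod_cast congrArg (Nat.cast (R := ℚ)) hham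
    rw [hδ]
    push_cast at key' hhamQ ⊢
    linarith
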